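/- Let ℒ₁ = (𝕃̂(a,b,c), d) be the Lawrence–Sullivan interval: the completed free Lie algebra on generators a, b of degree −1 and c of degree 0, where a and b are Maurer–Cartan elements (da = -(1/2)[a,a], db = -(1/2)[b,b]) and dc = ad_c(b) + Σ_{n≥0} (B_n/n!) ad_c^n(b−a), with B_n the Bernoulli numbers. Then d² = 0 on the generator c, i.e. d(dc) = 0 in 𝕃̂(a,b,c). -/

import Mathlib

/-- A ℤ-graded Lie algebra over ℚ (with Koszul signs). -/
structure GrLie where
  carrier : Type
  [isAddCommGroup : AddCommGroup carrier]
  [isModule : Module ℚ carrier]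
  grading : ℤ → Submodule ℚ carrier
  isInternal : DirectSum.IsInternal grading
  bracket : carrier →ₗ[ℚ] carrier →ₗ[ℚ] carrier
  bracket_mem : ∀ {i j : ℤ} {x y : carrier}, x ∈ grading i → y ∈ grading j →
      bracket x y ∈ grading (i + j)
  antisymm : ∀ {i j : ℤ} {x y : carrier}, x ∈ grading i → y ∈ grading j →
      bracket x y = -(((-1 : ℚ) ^ (i * j)) • bracket y x)
  jacobi : ∀ {i j k : ℤ} {x y z : carrier}, x ∈ grading i → y ∈ grading j → z ∈ grading k →
      ((-1 : ℚ) ^ (i * k)) • bracket x (bracket y z) +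
      ((-1 : ℚ) ^ (j * i)) • bracket y (bracket z x) +
      ((-1 : ℚ) ^ (k * j)) • bracket z (bracket x y) = 0

attribute [instance] GrLie.isAddCommGroup GrLie.isModule

/-- Iterated adjoint action `ad_c^n`. -/
def adpow (E : GrLie) (c : E.carrier) : ℕ → E.carrier → E.carrier
  | 0 => fun x => x
  | n + 1 => fun x => E.bracket c (adpow E c n x)


open PowerSeries Finset

private noncomputable def bb (n : ℕ) : ℚ := bernoulli n / n.factorial

namespace StmtAux

noncomputable abbrev AA : Type := Polynomial (Polynomial ℚ)
noncomputable def uu : AA := Polynomial.X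
noncomputable def vv : AA := Polynomial.C Polynomial.X

noncomputable def Bu : PowerSeries AA := rescale uu (bernoulliPowerSeries AA)
noncomputable def Bv : PowerSeries AA := rescale vv (bernoulliPowerSeries AA)
noncomputable def Buv : PowerSeries AA := rescale (uu + vv) (bernoulliPowerSeries AA)
noncomputable def Eu : PowerSeries AA := rescale uu (exp AA)
noncomputable def Ev : PowerSeries AA := rescale vv (exp AA)

lemma hu : Bu * (Eu - 1) = C (R := AA) uu * X := by
  have h := congrArg (rescale uu) (bernoulliPowerSeries_mul_exp_sub_one AA)
  rwa [map_mul, map_sub, map_one, rescale_X] at h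

lemma hv : Bv * (Ev - 1) = C (R := AA) vv * X := by
  have h := congrArg (rescale vv) (bernoulliPowerSeries_mul_exp_sub_one AA)
  rwa [map_mul, map_sub, map_one, rescale_X] at h

lemma huv : Buv * (Eu * Ev - 1) = (C (R := AA) uu + C (R := AA) vv) * X := by
  have h := congrArg (rescale (uu + vv)) (bernoulliPowerSeries_mul_exp_sub_one AA)
  rw [map_mul, map_sub, map_one, rescale_X] at h
  rw [show Eu * Ev = rescale (uu + vv) (exp AA) from exp_mul_exp_eq_exp_add uu vv, Buv, h, map_add]

noncomputable def GG : PowerSeries AA :=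
  X * (C (R := AA) vv * (Bu * Buv)) - X * (C (R := AA) vv * (Bu * Bv))
  + (X * (C (R := AA) uu * (Bv * Buv)) - X * (C (R := AA) uu * (Bv * Bu)))
  + X * (X * (C (R := AA) uu * (C (R := AA) vv * Buv)))

lemma GG_mul : GG * ((Eu - 1) * (Ev - 1)) = 0 := by
  have h1 := hu; have h2 := hv; have h3 := huv
  unfold GG
  linear_combination (C (R := AA) vv * X * (Ev - 1) * (Buv - Bv) - C (R := AA) uu * X * (C (R := AA) vv * X)) * h1
    + (C (R := AA) uu * X * (Eu - 1) * (Buv - Bu) - C (R := AA) uu * X * (C (R := AA) vv * X)) * h2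
    + (C (R := AA) uu * X * (C (R := AA) vv * X)) * h3

lemma Eu_ne : Eu - 1 ≠ 0 := by
  intro h
  have := congrArg (coeff (R := AA) 1) h
  rw [map_sub, map_zero] at this
  simp only [Eu, coeff_rescale, coeff_exp, PowerSeries.coeff_one] at this
  simp only [Nat.factorial_one, Nat.cast_one, one_ne_zero, if_false, sub_zero, pow_one] at this
  rw [show algebraMap ℚ AA (1/1) = 1 by norm_num, mul_one] at this
  exact Polynomial.X_ne_zero this

lemma Ev_ne : Ev - 1 ≠ 0 := by
  intro h
  have := congrArg (coeff (R := AA) 1) h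
  rw [map_sub, map_zero] at this
  simp only [Ev, coeff_rescale, coeff_exp, PowerSeries.coeff_one] at this
  simp only [Nat.factorial_one, Nat.cast_one, one_ne_zero, if_false, sub_zero, pow_one] at this
  rw [show algebraMap ℚ AA (1/1) = 1 by norm_num, mul_one] at this
  exact Polynomial.C_ne_zero.mpr Polynomial.X_ne_zero this

lemma GG_eq_zero : GG = 0 := by
  rcases mul_eq_zero.mp GG_mul with h | h
  · exact h
  · exact absurd h (mul_ne_zero Eu_ne Ev_ne)

end StmtAux

namespace StmtAux
open Polynomial in
noncomputable def mono (a d : ℕ) : AA := Polynomial.C (Polynomial.X ^ d) * Polynomial.X ^ a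

lemma ext2_mono (n m a d : ℕ) :
    ((mono a d).coeff n).coeff m = if a = n ∧ d = m then (1:ℚ) else 0 := by
  rw [mono, Polynomial.coeff_C_mul, Polynomial.coeff_X_pow]
  by_cases h1 : n = a
  · rw [if_pos h1, mul_one, Polynomial.coeff_X_pow]
    by_cases h2 : m = d
    · rw [if_pos h2, if_pos ⟨h1.symm, h2.symm⟩]
    · rw [if_neg h2, if_neg (by tauto)]
  · rw [if_neg h1, mul_zero, Polynomial.coeff_zero, if_neg (by tauto)]

lemma ext2_smul (n m : ℕ) (q : ℚ) (p : AA) :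
    ((q • p).coeff n).coeff m = q * (p.coeff n).coeff m := by
  rw [Polynomial.coeff_smul, Polynomial.coeff_smul, smul_eq_mul]

lemma alg_mul (q : ℚ) (p : AA) : algebraMap ℚ AA q * p = q • p := (Algebra.smul_def q p).symm

lemma natCast_mul (c : ℕ) (p : AA) : (c : AA) * p = (c : ℚ) • p := by
  rw [← map_natCast (algebraMap ℚ AA) c, alg_mul]

lemma coeff_B (w : AA) (n : ℕ) :
    coeff (R := AA) n (rescale w (bernoulliPowerSeries AA)) = w ^ n * algebraMap ℚ AA (bb n) := by
  simp [coeff_rescale, bernoulliPowerSeries, coeff_mk, bb]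

lemma coeff_BB (w1 w2 : AA) (n : ℕ) :
    coeff (R := AA) n (rescale w1 (bernoulliPowerSeries AA) * rescale w2 (bernoulliPowerSeries AA)) =
    ∑ i ∈ range (n+1), (bb i * bb (n-i)) •
      (w1 ^ i * w2 ^ (n-i)) := by
  rw [PowerSeries.coeff_mul, Finset.Nat.sum_antidiagonal_eq_sum_range_succ_mk]
  refine Finset.sum_congr rfl fun i _ => ?_
  rw [coeff_B, coeff_B]
  rw [show w1 ^ i * algebraMap ℚ AA (bb i) * (w2 ^ (n-i) * algebraMap ℚ AA (bb (n-i)))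
      = algebraMap ℚ AA (bb i) * (algebraMap ℚ AA (bb (n-i)) * (w1 ^ i * w2 ^ (n-i))) by ring,
    alg_mul, alg_mul, smul_smul]

end StmtAux

namespace StmtAux

lemma hexp1 (i j : ℕ) : vv * (uu^i * (uu+vv)^j)
    = ∑ k ∈ range (j+1), ((j.choose k : ℚ)) • mono (i+k) (j-k+1) := by
  rw [add_pow, Finset.mul_sum, Finset.mul_sum]
  refine sum_congr rfl fun k hk => ?_
  rw [show vv * (uu^i * (uu^k * vv^(j-k) * ((j.choose k : ℕ):AA)))
      = ((j.choose k : ℕ):AA) * ((vv^(j-k) * vv) * uu^(i+k)) by ring, natCast_mul]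
  congr 1
  show (Polynomial.C Polynomial.X)^(j-k) * Polynomial.C Polynomial.X * Polynomial.X^(i+k) = _
  rw [← Polynomial.C_pow, ← Polynomial.C_mul, ← pow_succ, mono]

lemma hexp2 (i j : ℕ) : uu * (vv^i * (uu+vv)^j)
    = ∑ k ∈ range (j+1), ((j.choose k : ℚ)) • mono (k+1) (i+(j-k)) := by
  rw [add_pow, Finset.mul_sum, Finset.mul_sum]
  refine sum_congr rfl fun k hk => ?_
  rw [show uu * (vv^i * (uu^k * vv^(j-k) * ((j.choose k : ℕ):AA)))
      = ((j.choose k : ℕ):AA) * ((vv^i * vv^(j-k)) * (uu^k * uu)) by ring, natCast_mul]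
  congr 1
  show (Polynomial.C Polynomial.X)^i * (Polynomial.C Polynomial.X)^(j-k) *
      (Polynomial.X^k * Polynomial.X) = _
  rw [← Polynomial.C_pow, ← Polynomial.C_pow, ← Polynomial.C_mul, ← pow_add, ← pow_succ, mono]

lemma J1 (P Q i j : ℕ) (hij : i + j = P+Q+1) :
    ((vv * (uu^i * (uu+vv)^j)).coeff (P+1)).coeff (Q+1)
      = if i ≤ P+1 then ((j.choose (P+1-i)) : ℚ) else 0 := by
  rw [hexp1, Polynomial.finset_sum_coeff]
  simp only [Polynomial.finset_sum_coeff, ext2_smul, ext2_mono]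
  by_cases hi : i ≤ P+1
  · rw [if_pos hi]
    rw [Finset.sum_eq_single_of_mem (P+1-i) (by simp; omega)]
    · rw [if_pos ⟨by omega, by omega⟩, mul_one]
    · intro k _ hk
      rw [if_neg (by omega), mul_zero]
  · rw [if_neg hi]
    refine Finset.sum_eq_zero fun k _ => ?_
    rw [if_neg (by omega), mul_zero]

lemma J2 (P Q i j : ℕ) :
    ((vv * (uu^i * vv^j)).coeff (P+1)).coeff (Q+1)
      = if i = P+1 ∧ j = Q then (1:ℚ) else 0 := by
  rw [show vv * (uu^i * vv^j) = (vv^j * vv) * uu^i by ring]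
  rw [show (vv^j * vv) * uu^i = mono i (j+1) by
    show (Polynomial.C Polynomial.X)^j * Polynomial.C Polynomial.X * Polynomial.X^i = _
    rw [← Polynomial.C_pow, ← Polynomial.C_mul, ← pow_succ, mono]]
  rw [ext2_mono]
  by_cases h : i = P+1 ∧ j = Q
  · rw [if_pos ⟨h.1, by omega⟩, if_pos h]
  · rw [if_neg (by omega), if_neg h]

lemma J3 (P Q i j : ℕ) (hij : i + j = P+Q+1) :
    ((uu * (vv^i * (uu+vv)^j)).coeff (P+1)).coeff (Q+1)
      = if i ≤ Q+1 then ((j.choose P) : ℚ) else 0 := by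
  rw [hexp2, Polynomial.finset_sum_coeff]
  simp only [Polynomial.finset_sum_coeff, ext2_smul, ext2_mono]
  by_cases hi : i ≤ Q+1
  · rw [if_pos hi]
    rw [Finset.sum_eq_single_of_mem P (by simp; omega)]
    · rw [if_pos ⟨rfl, by omega⟩, mul_one]
    · intro k _ hk
      rw [if_neg (by omega), mul_zero]
  · rw [if_neg hi]
    refine Finset.sum_eq_zero fun k hk => ?_
    simp only [Finset.mem_range] at hk
    rw [if_neg (by omega), mul_zero]

lemma J4 (P Q i j : ℕ) :
    ((uu * (vv^i * uu^j)).coeff (P+1)).coeff (Q+1)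
      = if j = P ∧ i = Q+1 then (1:ℚ) else 0 := by
  rw [show uu * (vv^i * uu^j) = (vv^i) * (uu^j * uu) by ring]
  rw [show (vv^i) * (uu^j * uu) = mono (j+1) i by
    show (Polynomial.C Polynomial.X)^i * (Polynomial.X^j * Polynomial.X) = _
    rw [← Polynomial.C_pow, ← pow_succ, mono]]
  rw [ext2_mono]
  by_cases h : j = P ∧ i = Q+1
  · rw [if_pos ⟨by omega, h.2⟩, if_pos h]
  · rw [if_neg (by omega), if_neg h]

lemma J5 (P Q : ℕ) :
    ((uu * (vv * (uu+vv)^(P+Q))).coeff (P+1)).coeff (Q+1) = (((P+Q).choose P) : ℚ) := by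
  have := J3 P Q 1 (P+Q) (by omega)
  rw [show vv^1 = vv by ring] at this
  rw [this, if_pos (by omega)]

end StmtAux

namespace StmtAux

lemma t1val (P Q : ℕ) :
    ((coeff (R := AA) (P+Q+1+1) (X * (C (R := AA) vv * (Bu * Buv)))).coeff (P+1)).coeff (Q+1)
    = ∑ i ∈ range (P+Q+2), bb i * bb (P+Q+1-i) *
        (if i ≤ P+1 then (((P+Q+1-i).choose (P+1-i)):ℚ) else 0) := by
  rw [coeff_succ_X_mul, PowerSeries.coeff_C_mul]
  rw [show Bu * Buv = rescale uu (bernoulliPowerSeries AA) * rescale (uu+vv) (bernoulliPowerSeries AA) from rfl]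
  rw [coeff_BB, Finset.mul_sum, Polynomial.finset_sum_coeff]
  simp only [Polynomial.finset_sum_coeff, mul_smul_comm, ext2_smul]
  rw [show P+Q+1+1 = P+Q+2 from rfl]
  refine sum_congr rfl fun i hi => ?_
  simp only [Finset.mem_range] at hi
  rw [J1 P Q i (P+Q+1-i) (by omega), mul_assoc]

lemma t2val (P Q : ℕ) :
    ((coeff (R := AA) (P+Q+1+1) (X * (C (R := AA) vv * (Bu * Bv)))).coeff (P+1)).coeff (Q+1)
    = bb (P+1) * bb Q := by
  rw [coeff_succ_X_mul, PowerSeries.coeff_C_mul]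
  rw [show Bu * Bv = rescale uu (bernoulliPowerSeries AA) * rescale vv (bernoulliPowerSeries AA) from rfl]
  rw [coeff_BB, Finset.mul_sum, Polynomial.finset_sum_coeff]
  simp only [Polynomial.finset_sum_coeff, mul_smul_comm, ext2_smul]
  rw [Finset.sum_eq_single_of_mem (P+1) (by simp)]
  · rw [J2, if_pos ⟨rfl, by omega⟩, mul_one, show P+Q+1-(P+1) = Q by omega]
  · intro k _ hk
    rw [J2, if_neg (by tauto), mul_zero]

lemma t3val (P Q : ℕ) :
    ((coeff (R := AA) (P+Q+1+1) (X * (C (R := AA) uu * (Bv * Buv)))).coeff (P+1)).coeff (Q+1)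
    = ∑ i ∈ range (P+Q+2), bb i * bb (P+Q+1-i) *
        (if i ≤ Q+1 then (((P+Q+1-i).choose P):ℚ) else 0) := by
  rw [coeff_succ_X_mul, PowerSeries.coeff_C_mul]
  rw [show Bv * Buv = rescale vv (bernoulliPowerSeries AA) * rescale (uu+vv) (bernoulliPowerSeries AA) from rfl]
  rw [coeff_BB, Finset.mul_sum, Polynomial.finset_sum_coeff]
  simp only [Polynomial.finset_sum_coeff, mul_smul_comm, ext2_smul]
  rw [show P+Q+1+1 = P+Q+2 from rfl]
  refine sum_congr rfl fun i hi => ?_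
  simp only [Finset.mem_range] at hi
  rw [J3 P Q i (P+Q+1-i) (by omega), mul_assoc]

lemma t4val (P Q : ℕ) :
    ((coeff (R := AA) (P+Q+1+1) (X * (C (R := AA) uu * (Bv * Bu)))).coeff (P+1)).coeff (Q+1)
    = bb (Q+1) * bb P := by
  rw [coeff_succ_X_mul, PowerSeries.coeff_C_mul]
  rw [show Bv * Bu = rescale vv (bernoulliPowerSeries AA) * rescale uu (bernoulliPowerSeries AA) from rfl]
  rw [coeff_BB, Finset.mul_sum, Polynomial.finset_sum_coeff]
  simp only [Polynomial.finset_sum_coeff, mul_smul_comm, ext2_smul]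
  rw [Finset.sum_eq_single_of_mem (Q+1) (by simp)]
  · rw [J4, if_pos ⟨by omega, rfl⟩, mul_one, show P+Q+1-(Q+1) = P by omega]
  · intro k _ hk
    rw [J4, if_neg (by tauto), mul_zero]

lemma t5val (P Q : ℕ) :
    ((coeff (R := AA) (P+Q+1+1) (X * (X * (C (R := AA) uu * (C (R := AA) vv * Buv))))).coeff (P+1)).coeff (Q+1)
    = bb (P+Q) * (((P+Q).choose P):ℚ) := by
  rw [coeff_succ_X_mul, show P+Q+1 = P+Q+1-1+1 from rfl, coeff_succ_X_mul,
    PowerSeries.coeff_C_mul, PowerSeries.coeff_C_mul]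
  rw [show Buv = rescale (uu+vv) (bernoulliPowerSeries AA) from rfl, coeff_B]
  rw [show P+Q+1-1 = P+Q by omega]
  rw [show uu * (vv * ((uu+vv)^(P+Q) * algebraMap ℚ AA (bb (P+Q))))
      = algebraMap ℚ AA (bb (P+Q)) * (uu * (vv * (uu+vv)^(P+Q))) by ring, alg_mul]
  rw [ext2_smul, J5]

end StmtAux

namespace StmtAux

lemma sum_trunc1 (P Q : ℕ) :
    ∑ i ∈ range (P+Q+2), bb i * bb (P+Q+1-i) *
        (if i ≤ P+1 then (((P+Q+1-i).choose (P+1-i)):ℚ) else 0)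
    = (∑ i ∈ range (P+1), bb (P-i) * bb (Q+i+1) * (((Q+i+1).choose (i+1)):ℚ))
      + bb (P+1) * bb Q := by
  rw [← Finset.sum_subset (Finset.range_subset_range.mpr (by omega : P+2 ≤ P+Q+2))
      (fun i _ hni => by
        rw [if_neg (by simp only [Finset.mem_range] at hni; omega), mul_zero])]
  rw [Finset.sum_range_succ, if_pos (le_refl _)]
  rw [show P+Q+1-(P+1) = Q by omega, show P+1-(P+1) = 0 by omega, Nat.choose_zero_right]
  rw [Nat.cast_one, mul_one]
  congr 1
  rw [← Finset.sum_range_reflect]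
  refine sum_congr rfl fun i hi => ?_
  simp only [Finset.mem_range] at hi
  rw [show P+1-1-i = P-i by omega, if_pos (by omega),
    show P+Q+1-(P-i) = Q+i+1 by omega, show P+1-(P-i) = i+1 by omega]

lemma sum_trunc3 (P Q : ℕ) :
    ∑ i ∈ range (P+Q+2), bb i * bb (P+Q+1-i) *
        (if i ≤ Q+1 then (((P+Q+1-i).choose P):ℚ) else 0)
    = (∑ i ∈ range (Q+1), bb (Q-i) * bb (P+i+1) * (((P+i+1).choose (i+1)):ℚ))
      + bb (Q+1) * bb P := by
  rw [← Finset.sum_subset (Finset.range_subset_range.mpr (by omega : Q+2 ≤ P+Q+2))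
      (fun i _ hni => by
        rw [if_neg (by simp only [Finset.mem_range] at hni; omega), mul_zero])]
  rw [Finset.sum_range_succ, if_pos (le_refl _)]
  rw [show P+Q+1-(Q+1) = P by omega, Nat.choose_self, Nat.cast_one, mul_one]
  congr 1
  rw [← Finset.sum_range_reflect]
  refine sum_congr rfl fun i hi => ?_
  simp only [Finset.mem_range] at hi
  rw [show Q+1-1-i = Q-i by omega, if_pos (by omega),
    show P+Q+1-(Q-i) = P+i+1 by omega]
  congr 2
  rw [← Nat.choose_symm (by omega : i+1 ≤ P+i+1), show P+i+1-(i+1) = P by omega]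

lemma QI (P Q : ℕ) :
    (∑ i ∈ range (P+1), bb (P-i) * bb (Q+i+1) * (((Q+i+1).choose (i+1)):ℚ))
  + (∑ i ∈ range (Q+1), bb (Q-i) * bb (P+i+1) * (((P+i+1).choose (i+1)):ℚ))
  + bb (P+Q) * (((P+Q).choose P):ℚ) = 0 := by
  have h0 := congrArg (fun φ => ((coeff (R := AA) (P+Q+1+1) φ).coeff (P+1)).coeff (Q+1)) GG_eq_zero
  simp only [GG, map_sub, map_add, map_zero, Polynomial.coeff_sub, Polynomial.coeff_add,
    Polynomial.coeff_zero] at h0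
  rw [t1val, t2val, t3val, t4val, t5val, sum_trunc1, sum_trunc3] at h0
  linarith [h0]

end StmtAux

open Finset

namespace StmtAux

/-- triangle reindex A -/
lemma TRI_A {A : Type*} [AddCommMonoid A] (K : ℕ) (g : ℕ → ℕ → A) :
    ∑ n ∈ range K, ∑ i ∈ range n, g n i
      = ∑ Q ∈ range K, ∑ i ∈ range (K-1-Q), g (Q+i+1) i := by
  induction K with
  | zero => simp
  | succ K ih =>
    rw [Finset.sum_range_succ, ih]
    rw [Finset.sum_range_succ (fun Q => ∑ i ∈ range (K+1-1-Q), g (Q+i+1) i)]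
    rw [show K+1-1-K = 0 by omega, Finset.range_zero, Finset.sum_empty, add_zero]
    have hrow : ∀ Q ∈ range K, ∑ i ∈ range (K+1-1-Q), g (Q+i+1) i
        = (∑ i ∈ range (K-1-Q), g (Q+i+1) i) + g K (K-1-Q) := by
      intro Q hQ
      simp only [Finset.mem_range] at hQ
      rw [show K+1-1-Q = (K-1-Q)+1 by omega, Finset.sum_range_succ]
      congr 2
      omega
    rw [Finset.sum_congr rfl hrow, Finset.sum_add_distrib]
    congr 1
    exact (Finset.sum_range_reflect (fun i => g K i) K).symm

/-- triangle reindex B -/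
lemma TRI_B {A : Type*} [AddCommMonoid A] (M : ℕ) (f : ℕ → ℕ → A) :
    ∑ n ∈ range M, ∑ j ∈ range (M-n), f n j
      = ∑ t ∈ range M, ∑ n ∈ range (t+1), f n (t-n) := by
  induction M with
  | zero => simp
  | succ M ih =>
    rw [Finset.sum_range_succ (fun t => ∑ n ∈ range (t+1), f n (t-n)), ← ih]
    rw [Finset.sum_range_succ (fun n => f n (M-n)), show M-M = 0 by omega]
    rw [Finset.sum_range_succ, show M+1-M = 1 by omega, Finset.sum_range_one]
    rw [← add_assoc]
    congr 1
    rw [← Finset.sum_add_distrib]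
    refine Finset.sum_congr rfl fun n hn => ?_
    simp only [Finset.mem_range] at hn
    rw [show M+1-n = (M-n)+1 by omega, Finset.sum_range_succ]

variable (E : GrLie) (c : E.carrier)

lemma adpow_eq_pow (n : ℕ) (y : E.carrier) : adpow E c n y = ((E.bracket c)^n) y := by
  induction n with
  | zero => rfl
  | succ n ih =>
    show E.bracket c (adpow E c n y) = _
    rw [ih, pow_succ', Module.End.mul_apply]

lemma adpow_add (n : ℕ) (y z : E.carrier) :
    adpow E c n (y + z) = adpow E c n y + adpow E c n z := by
  simp [adpow_eq_pow]

lemma adpow_neg (n : ℕ) (y : E.carrier) : adpow E c n (-y) = -adpow E c n y := by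
  simp [adpow_eq_pow]

lemma adpow_smul (n : ℕ) (q : ℚ) (y : E.carrier) :
    adpow E c n (q • y) = q • adpow E c n y := by
  simp [adpow_eq_pow]

lemma adpow_sum (n : ℕ) {ι : Type*} (s : Finset ι) (f : ι → E.carrier) :
    adpow E c n (∑ i ∈ s, f i) = ∑ i ∈ s, adpow E c n (f i) := by
  simp [adpow_eq_pow]

lemma adpow_adpow (i j : ℕ) (y : E.carrier) :
    adpow E c i (adpow E c j y) = adpow E c (i+j) y := by
  simp [adpow_eq_pow, pow_add, Module.End.mul_apply]

end StmtAux

namespace StmtAux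

lemma grading_cast {E : GrLie} {i j : ℤ} (h : i = j) {y : E.carrier}
    (hy : y ∈ E.grading i) : y ∈ E.grading j := h ▸ hy

lemma sym {E : GrLie} {u v : E.carrier} (hu : u ∈ E.grading (-1)) (hv : v ∈ E.grading (-1)) :
    E.bracket u v = E.bracket v u := by
  rw [E.antisymm hu hv, show ((-1 : ℤ) * (-1)) = 1 by norm_num, zpow_one, neg_smul, one_smul,
    neg_neg]

lemma ad_mem {E : GrLie} {c : E.carrier} (hc : c ∈ E.grading 0) {i : ℤ} {y : E.carrier}
    (hy : y ∈ E.grading i) : E.bracket c y ∈ E.grading i :=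
  grading_cast (zero_add i) (E.bracket_mem hc hy)

lemma adpow_mem {E : GrLie} {c : E.carrier} (hc : c ∈ E.grading 0) {i : ℤ} (n : ℕ)
    {y : E.carrier} (hy : y ∈ E.grading i) : adpow E c n y ∈ E.grading i := by
  induction n with
  | zero => exact hy
  | succ n ih => exact ad_mem hc ih

lemma neg_one_zpow_sq (m : ℤ) : ((-1 : ℚ)) ^ m * ((-1 : ℚ)) ^ m = 1 := by
  rw [← zpow_add₀ (by norm_num : (-1:ℚ) ≠ 0), show m + m = 2 * m by ring, zpow_mul]
  norm_num

lemma adL {E : GrLie} {c : E.carrier} (hc : c ∈ E.grading 0) {j k : ℤ} {u v : E.carrier}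
    (hu : u ∈ E.grading j) (hv : v ∈ E.grading k) :
    E.bracket c (E.bracket u v)
      = E.bracket (E.bracket c u) v + E.bracket u (E.bracket c v) := by
  have hJ := E.jacobi hc hu hv
  rw [zero_mul, mul_zero, zpow_zero, one_smul, one_smul] at hJ
  rw [E.antisymm hv hc, mul_zero, zpow_zero, one_smul, map_neg] at hJ
  rw [E.antisymm hv (ad_mem hc hu), smul_neg, smul_smul, neg_one_zpow_sq, one_smul] at hJ
  -- hJ : br c (br u v) + br u (-(br c v)) + br (br c u) v = 0  (roughly)
  apply sub_eq_zero.mp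
  calc E.bracket c (E.bracket u v)
      - (E.bracket (E.bracket c u) v + E.bracket u (E.bracket c v))
      = E.bracket c (E.bracket u v) + -(E.bracket u (E.bracket c v))
          + -(E.bracket (E.bracket c u) v) := by abel
    _ = 0 := by rw [← hJ]

end StmtAux

namespace StmtAux

lemma adpow_zero {E : GrLie} (c : E.carrier) (y : E.carrier) : adpow E c 0 y = y := rfl

lemma ad_adpow {E : GrLie} (c : E.carrier) (k : ℕ) (w : E.carrier) :
    E.bracket c (adpow E c k w) = adpow E c (k+1) w := rfl

lemma delta_adpow {E : GrLie} {c : E.carrier} (δ : E.carrier →ₗ[ℚ] E.carrier)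
    (hL : ∀ y : E.carrier, δ (E.bracket c y) = E.bracket (δ c) y + E.bracket c (δ y))
    (n : ℕ) (y : E.carrier) :
    δ (adpow E c n y)
      = (∑ k ∈ range n, adpow E c k (E.bracket (δ c) (adpow E c (n-1-k) y)))
        + adpow E c n (δ y) := by
  induction n with
  | zero => simp [adpow_zero]
  | succ n ih =>
    rw [← ad_adpow, hL, ih, map_add, map_sum]
    rw [Finset.sum_range_succ'
      (fun k => adpow E c k (E.bracket (δ c) (adpow E c (n+1-1-k) y))) n]
    simp only [ad_adpow, adpow_zero]
    have hss : (∑ k ∈ range n, adpow E c (k+1) (E.bracket (δ c) (adpow E c (n+1-1-(k+1)) y)))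
        = ∑ k ∈ range n, adpow E c (k+1) (E.bracket (δ c) (adpow E c (n-1-k) y)) :=
      Finset.sum_congr rfl fun k hk => by rw [show n+1-1-(k+1) = n-1-k by omega]
    rw [hss, show n+1-1-0 = n by omega]
    abel

lemma BX {E : GrLie} {c b x : E.carrier} (hc : c ∈ E.grading 0) (hb : b ∈ E.grading (-1))
    (hx : x ∈ E.grading (-1)) (n : ℕ) :
    adpow E c n (E.bracket x b)
      = E.bracket (adpow E c n x) b
        + ∑ k ∈ range n, adpow E c k (E.bracket (E.bracket c b) (adpow E c (n-1-k) x)) := by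
  induction n with
  | zero => simp [adpow_zero]
  | succ n ih =>
    rw [← ad_adpow, ih, map_add, map_sum]
    rw [adL hc (adpow_mem hc n hx) hb]
    rw [sym (adpow_mem hc n hx) (ad_mem hc hb)]
    rw [Finset.sum_range_succ'
      (fun k => adpow E c k (E.bracket (E.bracket c b) (adpow E c (n+1-1-k) x))) n]
    simp only [ad_adpow, adpow_zero]
    have hss : (∑ k ∈ range n, adpow E c (k+1) (E.bracket (E.bracket c b) (adpow E c (n+1-1-(k+1)) x)))
        = ∑ k ∈ range n, adpow E c (k+1) (E.bracket (E.bracket c b) (adpow E c (n-1-k) x)) :=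
      Finset.sum_congr rfl fun k hk => by rw [show n+1-1-(k+1) = n-1-k by omega]
    rw [hss, show n+1-1-0 = n by omega]
    abel

end StmtAux

namespace StmtAux

lemma Dsum {E : GrLie} {c x : E.carrier} (hc : c ∈ E.grading 0) (hx : x ∈ E.grading (-1))
    (n j : ℕ) :
    ∑ k ∈ range n, adpow E c k (E.bracket (adpow E c j x) (adpow E c (n-1-k) x))
      = ∑ i ∈ range n, ((n.choose (i+1) : ℚ))
          • E.bracket (adpow E c (j+i) x) (adpow E c (n-1-i) x) := by
  induction n with
  | zero => simp
  | succ n ih =>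
    rw [Finset.sum_range_succ'
      (fun k => adpow E c k (E.bracket (adpow E c j x) (adpow E c (n+1-1-k) x))) n]
    have hss : (∑ k ∈ range n,
          adpow E c (k+1) (E.bracket (adpow E c j x) (adpow E c (n+1-1-(k+1)) x)))
        = ∑ k ∈ range n, E.bracket c
            (adpow E c k (E.bracket (adpow E c j x) (adpow E c (n-1-k) x))) :=
      Finset.sum_congr rfl fun k hk => by
        rw [show n+1-1-(k+1) = n-1-k by omega, ad_adpow]
    rw [hss, ← map_sum, ih, map_sum]
    have hterm : ∀ i ∈ range n, E.bracket c (((n.choose (i+1) : ℚ))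
          • E.bracket (adpow E c (j+i) x) (adpow E c (n-1-i) x))
        = ((n.choose (i+1) : ℚ)) • (E.bracket (adpow E c (j+i+1) x) (adpow E c (n-1-i) x)
            + E.bracket (adpow E c (j+i) x) (adpow E c (n-i) x)) := by
      intro i hi
      simp only [Finset.mem_range] at hi
      rw [map_smul, adL hc (adpow_mem hc (j+i) hx) (adpow_mem hc (n-1-i) hx),
        ad_adpow, ad_adpow, show n-1-i+1 = n-i by omega]
    rw [Finset.sum_congr rfl hterm]
    -- RHS side
    have hR : (∑ i ∈ range (n+1), (((n+1).choose (i+1) : ℚ))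
          • E.bracket (adpow E c (j+i) x) (adpow E c (n+1-1-i) x))
        = (∑ i ∈ range (n+1), ((n.choose i : ℚ))
              • E.bracket (adpow E c (j+i) x) (adpow E c (n-i) x))
          + ∑ i ∈ range (n+1), ((n.choose (i+1) : ℚ))
              • E.bracket (adpow E c (j+i) x) (adpow E c (n-i) x) := by
      rw [← Finset.sum_add_distrib]
      refine Finset.sum_congr rfl fun i hi => ?_
      rw [show n+1-1-i = n-i by omega, Nat.choose_succ_succ, Nat.cast_add, add_smul]
    rw [hR]
    have hR1 : (∑ i ∈ range (n+1), ((n.choose i : ℚ))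
          • E.bracket (adpow E c (j+i) x) (adpow E c (n-i) x))
        = (∑ i ∈ range n, ((n.choose (i+1) : ℚ))
              • E.bracket (adpow E c (j+i+1) x) (adpow E c (n-1-i) x))
          + E.bracket (adpow E c j x) (adpow E c n x) := by
      rw [Finset.sum_range_succ'
        (fun i => ((n.choose i : ℚ)) • E.bracket (adpow E c (j+i) x) (adpow E c (n-i) x)) n]
      simp only [Nat.choose_zero_right, Nat.cast_one, one_smul, Nat.add_zero, Nat.sub_zero]
      congr 1
      refine Finset.sum_congr rfl fun i hi => ?_
      simp only [Finset.mem_range] at hi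
      rw [show n-(i+1) = n-1-i by omega, show j+(i+1) = j+i+1 by omega]
    rw [hR1]
    have hR2 : (∑ i ∈ range (n+1), ((n.choose (i+1) : ℚ))
          • E.bracket (adpow E c (j+i) x) (adpow E c (n-i) x))
        = ∑ i ∈ range n, ((n.choose (i+1) : ℚ))
              • E.bracket (adpow E c (j+i) x) (adpow E c (n-i) x) := by
      rw [Finset.sum_range_succ, Nat.choose_succ_self, Nat.cast_zero, zero_smul, add_zero]
    rw [hR2]
    simp only [smul_add]
    rw [Finset.sum_add_distrib, show n+1-1-0 = n by omega, adpow_zero]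
    abel

lemma AXX {E : GrLie} {c x : E.carrier} (hc : c ∈ E.grading 0) (hx : x ∈ E.grading (-1))
    (n : ℕ) :
    adpow E c n (E.bracket x x)
      = ∑ i ∈ range (n+1), ((n.choose i : ℚ))
          • E.bracket (adpow E c i x) (adpow E c (n-i) x) := by
  induction n with
  | zero => simp [adpow_zero]
  | succ n ih =>
    rw [← ad_adpow, ih, map_sum]
    have hterm : ∀ i ∈ range (n+1), E.bracket c (((n.choose i : ℚ))
          • E.bracket (adpow E c i x) (adpow E c (n-i) x))
        = ((n.choose i : ℚ)) • (E.bracket (adpow E c (i+1) x) (adpow E c (n-i) x)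
            + E.bracket (adpow E c i x) (adpow E c (n-i+1) x)) := by
      intro i hi
      rw [map_smul, adL hc (adpow_mem hc i hx) (adpow_mem hc (n-i) hx), ad_adpow, ad_adpow]
    rw [Finset.sum_congr rfl hterm]
    have hR : (∑ i ∈ range (n+2), (((n+1).choose i : ℚ))
          • E.bracket (adpow E c i x) (adpow E c (n+1-i) x))
        = (∑ i ∈ range (n+1), ((n.choose i : ℚ))
              • E.bracket (adpow E c (i+1) x) (adpow E c (n-i) x))
          + ((∑ i ∈ range n, ((n.choose (i+1) : ℚ))
              • E.bracket (adpow E c (i+1) x) (adpow E c (n-i) x))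
            + E.bracket (adpow E c 0 x) (adpow E c (n+1) x)) := by
      rw [Finset.sum_range_succ'
        (fun i => (((n+1).choose i : ℚ)) • E.bracket (adpow E c i x) (adpow E c (n+1-i) x)) (n+1)]
      simp only [Nat.choose_zero_right, Nat.cast_one, one_smul, Nat.sub_zero]
      have hthis : ∀ i ∈ range (n+1), (((n+1).choose (i+1) : ℚ))
            • E.bracket (adpow E c (i+1) x) (adpow E c (n+1-(i+1)) x)
          = ((n.choose i : ℚ)) • E.bracket (adpow E c (i+1) x) (adpow E c (n-i) x)
            + ((n.choose (i+1) : ℚ)) • E.bracket (adpow E c (i+1) x) (adpow E c (n-i) x) := by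
        intro i hi
        rw [show n+1-(i+1) = n-i by omega, Nat.choose_succ_succ, Nat.cast_add, add_smul]
      rw [Finset.sum_congr rfl hthis, Finset.sum_add_distrib,
        Finset.sum_range_succ
          (fun i => ((n.choose (i+1) : ℚ)) • E.bracket (adpow E c (i+1) x) (adpow E c (n-i) x)) n,
        Nat.choose_succ_self, Nat.cast_zero, zero_smul, add_zero]
      abel
    rw [hR]
    have hL2 : (∑ i ∈ range (n+1), ((n.choose i : ℚ))
          • (E.bracket (adpow E c (i+1) x) (adpow E c (n-i) x)
            + E.bracket (adpow E c i x) (adpow E c (n-i+1) x)))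
        = (∑ i ∈ range (n+1), ((n.choose i : ℚ))
              • E.bracket (adpow E c (i+1) x) (adpow E c (n-i) x))
          + ∑ i ∈ range (n+1), ((n.choose i : ℚ))
              • E.bracket (adpow E c i x) (adpow E c (n-i+1) x) := by
      simp only [smul_add]
      rw [Finset.sum_add_distrib]
    rw [hL2]
    congr 1
    rw [Finset.sum_range_succ'
      (fun i => ((n.choose i : ℚ)) • E.bracket (adpow E c i x) (adpow E c (n-i+1) x)) n]
    simp only [Nat.choose_zero_right, Nat.cast_one, one_smul, Nat.sub_zero, adpow_zero]
    congr 1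
    refine Finset.sum_congr rfl fun i hi => ?_
    simp only [Finset.mem_range] at hi
    rw [show n-(i+1)+1 = n-i by omega]

end StmtAux

namespace StmtAux

noncomputable def gsc (l Q : ℕ) : ℚ :=
  (∑ i ∈ range (l+1-Q), bb (Q+i+1) * bb (l-Q-i) * (((Q+i+1).choose (i+1)):ℚ))
    + (1/2 : ℚ) * bb l * ((l.choose Q):ℚ)

lemma XXcoef (l Q : ℕ) (hQ : Q ≤ l) : gsc l Q + gsc l (l-Q) = 0 := by
  have hq := QI (l-Q) Q
  rw [show (l-Q)+Q = l by omega] at hq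
  rw [Nat.choose_symm hQ] at hq
  unfold gsc
  have e1 : (∑ i ∈ range (l+1-Q), bb (Q+i+1) * bb (l-Q-i) * (((Q+i+1).choose (i+1)):ℚ))
      = ∑ i ∈ range ((l-Q)+1), bb ((l-Q)-i) * bb (Q+i+1) * (((Q+i+1).choose (i+1)):ℚ) := by
    rw [show l+1-Q = (l-Q)+1 by omega]
    exact Finset.sum_congr rfl fun i hi => by ring
  have e2 : (∑ i ∈ range (l+1-(l-Q)), bb ((l-Q)+i+1) * bb (l-(l-Q)-i) * ((((l-Q)+i+1).choose (i+1)):ℚ))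
      = ∑ i ∈ range (Q+1), bb (Q-i) * bb ((l-Q)+i+1) * ((((l-Q)+i+1).choose (i+1)):ℚ) := by
    rw [show l+1-(l-Q) = Q+1 by omega]
    refine Finset.sum_congr rfl fun i hi => ?_
    simp only [Finset.mem_range] at hi
    rw [show l-(l-Q)-i = Q-i by omega]; ring
  rw [e1, e2, Nat.choose_symm hQ]
  linarith [hq]

lemma XXsum {E : GrLie} {c x : E.carrier} (hc : c ∈ E.grading 0) (hx : x ∈ E.grading (-1))
    (l : ℕ) :
    (∑ n ∈ range (l+2), (bb n * bb (l+1-n)) •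
        ∑ k ∈ range n, adpow E c k (E.bracket (adpow E c (l+1-n) x) (adpow E c (n-1-k) x)))
      + ((1/2 : ℚ) * bb l) • adpow E c l (E.bracket x x) = 0 := by
  have h12 : (∑ n ∈ range (l+2), (bb n * bb (l+1-n)) •
        ∑ k ∈ range n, adpow E c k (E.bracket (adpow E c (l+1-n) x) (adpow E c (n-1-k) x)))
      = ∑ n ∈ range (l+2), ∑ i ∈ range n, (bb n * bb (l+1-n) * ((n.choose (i+1)):ℚ)) •
          E.bracket (adpow E c ((l+1-n)+i) x) (adpow E c (n-1-i) x) := by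
    refine Finset.sum_congr rfl fun n hn => ?_
    rw [Dsum hc hx n (l+1-n), Finset.smul_sum]
    exact Finset.sum_congr rfl fun i hi => smul_smul _ _ _
  rw [h12, TRI_A (l+2)]
  have h3 : ∀ Q ∈ range (l+2), (∑ i ∈ range (l+2-1-Q),
        (bb (Q+i+1) * bb (l+1-(Q+i+1)) * (((Q+i+1).choose (i+1)):ℚ)) •
          E.bracket (adpow E c ((l+1-(Q+i+1))+i) x) (adpow E c ((Q+i+1)-1-i) x))
      = (∑ i ∈ range (l+1-Q), bb (Q+i+1) * bb (l-Q-i) * (((Q+i+1).choose (i+1)):ℚ)) •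
          E.bracket (adpow E c (l-Q) x) (adpow E c Q x) := by
    intro Q hQ
    simp only [Finset.mem_range] at hQ
    rw [show l+2-1-Q = l+1-Q by omega, Finset.sum_smul]
    refine Finset.sum_congr rfl fun i hi => ?_
    simp only [Finset.mem_range] at hi
    rw [show l+1-(Q+i+1) = l-Q-i by omega, show (l-Q-i)+i = l-Q by omega,
      show (Q+i+1)-1-i = Q by omega]
  rw [Finset.sum_congr rfl h3, Finset.sum_range_succ, show l+1-(l+1) = 0 by omega]
  simp only [Finset.range_zero, Finset.sum_empty, Finset.sum_empty.symm]
  rw [zero_smul, add_zero]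
  rw [AXX hc hx l, Finset.smul_sum]
  have h4 : (∑ i ∈ range (l+1), ((1/2:ℚ) * bb l) • (((l.choose i):ℚ) •
        E.bracket (adpow E c i x) (adpow E c (l-i) x)))
      = ∑ Q ∈ range (l+1), ((1/2:ℚ) * bb l * ((l.choose Q):ℚ)) •
        E.bracket (adpow E c (l-Q) x) (adpow E c Q x) := by
    rw [← Finset.sum_range_reflect (fun Q => ((1/2:ℚ) * bb l * ((l.choose Q):ℚ)) •
        E.bracket (adpow E c (l-Q) x) (adpow E c Q x)) (l+1)]
    refine Finset.sum_congr rfl fun i hi => ?_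
    simp only [Finset.mem_range] at hi
    rw [smul_smul, show l+1-1-i = l-i by omega, show l-(l-i) = i by omega,
      Nat.choose_symm (by omega : i ≤ l)]
  rw [h4, ← Finset.sum_add_distrib]
  have h5 : ∀ Q ∈ range (l+1),
      ((∑ i ∈ range (l+1-Q), bb (Q+i+1) * bb (l-Q-i) * (((Q+i+1).choose (i+1)):ℚ)) •
          E.bracket (adpow E c (l-Q) x) (adpow E c Q x)
        + ((1/2:ℚ) * bb l * ((l.choose Q):ℚ)) • E.bracket (adpow E c (l-Q) x) (adpow E c Q x))
      = gsc l Q • E.bracket (adpow E c (l-Q) x) (adpow E c Q x) := by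
    intro Q hQ
    rw [← add_smul]; rfl
  rw [Finset.sum_congr rfl h5]
  have hTT : (∑ Q ∈ range (l+1), gsc l Q • E.bracket (adpow E c (l-Q) x) (adpow E c Q x))
      + (∑ Q ∈ range (l+1), gsc l Q • E.bracket (adpow E c (l-Q) x) (adpow E c Q x)) = 0 := by
    nth_rewrite 2 [← Finset.sum_range_reflect
      (fun Q => gsc l Q • E.bracket (adpow E c (l-Q) x) (adpow E c Q x)) (l+1)]
    rw [← Finset.sum_add_distrib]
    refine Finset.sum_eq_zero fun Q hQ => ?_
    simp only [Finset.mem_range] at hQ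
    rw [show l+1-1-Q = l-Q by omega, show l-(l-Q) = Q by omega]
    rw [sym (adpow_mem hc Q hx) (adpow_mem hc (l-Q) hx), ← add_smul,
      XXcoef l Q (by omega), zero_smul]
  have h2T := hTT
  rw [← two_smul ℚ] at h2T
  rcases smul_eq_zero.mp h2T with h | h
  · norm_num at h
  · exact h

end StmtAux

namespace StmtAux

lemma br_add_left {E : GrLie} (y z w : E.carrier) :
    E.bracket (y + z) w = E.bracket y w + E.bracket z w := by
  rw [map_add, LinearMap.add_apply]

lemma br_sub_left {E : GrLie} (y z w : E.carrier) :
    E.bracket (y - z) w = E.bracket y w - E.bracket z w := by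
  rw [map_sub, LinearMap.sub_apply]

lemma br_smul_left {E : GrLie} (q : ℚ) (y w : E.carrier) :
    E.bracket (q • y) w = q • E.bracket y w := by
  rw [map_smul, LinearMap.smul_apply]

lemma br_sum_left {E : GrLie} {ι : Type*} (s : Finset ι) (f : ι → E.carrier) (w : E.carrier) :
    E.bracket (∑ i ∈ s, f i) w = ∑ i ∈ s, E.bracket (f i) w := by
  rw [map_sum, LinearMap.sum_apply]

end StmtAux

open StmtAux

/-- the Lawrence–Sullivan interval.  Let `E` be a complete graded Lie algebra
(filtered by bracket length, `F 1 = E`, `[F p, F q] ⊆ F (p+q)`, separated) carrying a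
degree `-1` derivation `δ` (not assumed square-zero), and let `a, b` be Maurer–Cartan
elements of degree `-1` and `c` an element of degree `0` with
`δ c = [c, b] + Σ_{n ≥ 0} (Bₙ/n!) ad_c^n (b - a)`, the series converging in the
filtration (here `S` denotes its sum and `bernoulli` the Bernoulli numbers, `B₁ = -1/2`).
Then `δ (δ c) = 0`; in the completed free Lie algebra `𝕃̂(a,b,c)` this says exactly that
`d² = 0` on the generator `c`. -/
theorem stmt18
    (E : GrLie)
    (F : ℕ → Submodule ℚ E.carrier)
    (hF1 : F 1 = ⊤)
    (hFanti : ∀ n, F (n + 1) ≤ F n)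
    (hFbr : ∀ (p q : ℕ) (x y : E.carrier), x ∈ F p → y ∈ F q → E.bracket x y ∈ F (p + q))
    (hFsep : (⨅ n, F n) = ⊥)
    (δ : E.carrier →ₗ[ℚ] E.carrier)
    (hδ_mem : ∀ (k : ℤ) (x : E.carrier), x ∈ E.grading k → δ x ∈ E.grading (k - 1))
    (hδ_filt : ∀ (n : ℕ), ∀ x ∈ F n, δ x ∈ F n)
    (hδ_leibniz : ∀ (i : ℤ) (x : E.carrier), x ∈ E.grading i → ∀ y : E.carrier,
        δ (E.bracket x y) = E.bracket (δ x) y + ((-1 : ℚ) ^ i) • E.bracket x (δ y))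
    (a b c : E.carrier)
    (ha : a ∈ E.grading (-1)) (hb : b ∈ E.grading (-1)) (hc : c ∈ E.grading 0)
    (hδa : δ a = -((1/2 : ℚ) • E.bracket a a))
    (hδb : δ b = -((1/2 : ℚ) • E.bracket b b))
    (S : E.carrier)
    (hS : ∀ N : ℕ,
        S - ∑ n ∈ Finset.range N, ((bernoulli n) / (n.factorial : ℚ)) • adpow E c n (b - a)
          ∈ F (N + 1))
    (hδc : δ c = E.bracket c b + S) :
    δ (δ c) = 0 := by
  classical
  set x : E.carrier := b - a with hxdef
  have hx : x ∈ E.grading (-1) := sub_mem hb ha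
  have hFtop : ∀ y : E.carrier, y ∈ F 1 := fun y => hF1 ▸ Submodule.mem_top
  have hmono : ∀ {m n : ℕ}, m ≤ n → F n ≤ F m := by
    intro m n h
    induction h with
    | refl => exact le_rfl
    | step h ih => exact le_trans (hFanti _) ih
  have hadF : ∀ (n m : ℕ) (y : E.carrier), y ∈ F m → adpow E c n y ∈ F (n+m) := by
    intro n
    induction n with
    | zero => intro m y hy; simpa [adpow_zero] using hy
    | succ n ih =>
      intro m y hy
      have : E.bracket c (adpow E c n y) ∈ F (1 + (n + m)) :=
        hFbr 1 (n+m) _ _ (hFtop c) (ih m y hy)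
      rw [show 1 + (n+m) = n+1+m by omega] at this
      exact this
  have hL : ∀ y : E.carrier, δ (E.bracket c y) = E.bracket (δ c) y + E.bracket c (δ y) := by
    intro y
    have h := hδ_leibniz 0 c hc y
    rwa [zpow_zero, one_smul] at h
  -- the series partial sums
  set P : ℕ → E.carrier := fun K => ∑ n ∈ Finset.range K, bb n • adpow E c n x with hPdef
  have hSP : ∀ K : ℕ, S - P K ∈ F (K+1) := fun K => hS K
  -- master equation
  have hmaster : δ (δ c) = E.bracket S b + δ S := by
    rw [hδc, map_add]
    have h1 : δ (E.bracket c b) = E.bracket S b := by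
      rw [hL b, hδc, br_add_left, hδb, map_neg, map_smul, adL hc hb hb]
      have hhalf : ∀ w : E.carrier, (1/2 : ℚ) • (w + w) = w := by
        intro w; rw [smul_add, ← add_smul]; norm_num
      rw [show E.bracket b (E.bracket c b) = E.bracket (E.bracket c b) b from
        sym hb (ad_mem hc hb)]
      rw [hhalf]
      abel
    rw [h1]
  have hdx : δ x = -(E.bracket x b) + (1/2 : ℚ) • E.bracket x x := by
    rw [hxdef, map_sub, hδa, hδb]
    rw [show E.bracket (b-a) b = E.bracket b b - E.bracket a b from by rw [br_sub_left]]
    rw [show E.bracket (b-a) (b-a) = E.bracket b b - E.bracket b a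
        - (E.bracket a b - E.bracket a a) from by rw [br_sub_left, map_sub, map_sub]]
    rw [sym hb ha]
    module
  -- the main estimate
  have hkey : ∀ M : ℕ, δ (δ c) ∈ F (M+1) := by
    intro M
    have h2 : E.bracket S b = E.bracket (P M) b + E.bracket (S - P M) b := by
      rw [← br_add_left, add_sub_cancel]
    have h3 : δ S = δ (P M) + δ (S - P M) := by
      rw [← map_add, add_sub_cancel]
    have hEq : E.bracket (P M) b + δ (P M)
        = (∑ n ∈ Finset.range M, bb n • (E.bracket (adpow E c n x) b
            + (∑ k ∈ Finset.range n,
                adpow E c k (E.bracket (E.bracket c b) (adpow E c (n-1-k) x)))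
            - adpow E c n (E.bracket x b)))
          + (∑ n ∈ Finset.range M, bb n • ∑ j ∈ Finset.range (M-n), bb j •
              ∑ k ∈ Finset.range n,
                adpow E c k (E.bracket (adpow E c j x) (adpow E c (n-1-k) x)))
          + (∑ n ∈ Finset.range M, ((1/2 : ℚ) * bb n) • adpow E c n (E.bracket x x))
          + (∑ n ∈ Finset.range M, bb n • ∑ k ∈ Finset.range n,
              adpow E c k (E.bracket (S - P (M-n)) (adpow E c (n-1-k) x))) := by
      have hbrP : E.bracket (P M) b = ∑ n ∈ Finset.range M, bb n • E.bracket (adpow E c n x) b := by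
        rw [hPdef, br_sum_left]
        exact Finset.sum_congr rfl fun n _ => br_smul_left _ _ _
      have hdP : δ (P M) = ∑ n ∈ Finset.range M, bb n •
          ((∑ k ∈ Finset.range n, adpow E c k (E.bracket (δ c) (adpow E c (n-1-k) x)))
            + adpow E c n (δ x)) := by
        rw [hPdef, map_sum]
        exact Finset.sum_congr rfl fun n _ => by rw [map_smul, delta_adpow δ hL]
      rw [hbrP, hdP, ← Finset.sum_add_distrib, ← Finset.sum_add_distrib,
        ← Finset.sum_add_distrib, ← Finset.sum_add_distrib]
      refine Finset.sum_congr rfl fun n hn => ?_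
      -- split δ c inside
      have hδc2 : δ c = E.bracket c b + P (M-n) + (S - P (M-n)) := by
        rw [hδc]; abel
      have hDsplit : (∑ k ∈ Finset.range n, adpow E c k (E.bracket (δ c) (adpow E c (n-1-k) x)))
          = (∑ k ∈ Finset.range n,
              adpow E c k (E.bracket (E.bracket c b) (adpow E c (n-1-k) x)))
            + (∑ k ∈ Finset.range n, adpow E c k
                (E.bracket (P (M-n)) (adpow E c (n-1-k) x)))
            + (∑ k ∈ Finset.range n, adpow E c k
                (E.bracket (S - P (M-n)) (adpow E c (n-1-k) x))) := by
        rw [← Finset.sum_add_distrib, ← Finset.sum_add_distrib]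
        refine Finset.sum_congr rfl fun k hk => ?_
        rw [hδc2, br_add_left, br_add_left, adpow_add, adpow_add]
      have hB : (∑ k ∈ Finset.range n, adpow E c k
            (E.bracket (P (M-n)) (adpow E c (n-1-k) x)))
          = ∑ j ∈ Finset.range (M-n), bb j •
              ∑ k ∈ Finset.range n,
                adpow E c k (E.bracket (adpow E c j x) (adpow E c (n-1-k) x)) := by
        have h1 : ∀ k ∈ Finset.range n, adpow E c k
              (E.bracket (P (M-n)) (adpow E c (n-1-k) x))
            = ∑ j ∈ Finset.range (M-n), bb j •
                adpow E c k (E.bracket (adpow E c j x) (adpow E c (n-1-k) x)) := by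
          intro k hk
          rw [hPdef, br_sum_left, adpow_sum]
          refine Finset.sum_congr rfl fun j _ => ?_
          rw [br_smul_left, adpow_smul]
        rw [Finset.sum_congr rfl h1, Finset.sum_comm]
        exact Finset.sum_congr rfl fun j _ => (Finset.smul_sum).symm
      rw [hDsplit, hB, hdx, adpow_add, adpow_neg, adpow_smul]
      module
    -- Sum1 vanishes
    have hSum1 : (∑ n ∈ Finset.range M, bb n • (E.bracket (adpow E c n x) b
          + (∑ k ∈ Finset.range n,
              adpow E c k (E.bracket (E.bracket c b) (adpow E c (n-1-k) x)))
          - adpow E c n (E.bracket x b))) = 0 := by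
      refine Finset.sum_eq_zero fun n _ => ?_
      rw [BX hc hb hx n, sub_self, smul_zero]
    -- Sum2 + Sum3
    have hSum23 : (∑ n ∈ Finset.range M, bb n • ∑ j ∈ Finset.range (M-n), bb j •
            ∑ k ∈ Finset.range n,
              adpow E c k (E.bracket (adpow E c j x) (adpow E c (n-1-k) x)))
          + (∑ n ∈ Finset.range M, ((1/2 : ℚ) * bb n) • adpow E c n (E.bracket x x))
        ∈ F (M+1) := by
      have hconv : (∑ n ∈ Finset.range M, bb n • ∑ j ∈ Finset.range (M-n), bb j •
            ∑ k ∈ Finset.range n, adpow E c k (E.bracket (adpow E c j x) (adpow E c (n-1-k) x)))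
          = ∑ n ∈ Finset.range M, ∑ j ∈ Finset.range (M-n), (bb n * bb j) •
            ∑ k ∈ Finset.range n, adpow E c k (E.bracket (adpow E c j x) (adpow E c (n-1-k) x)) := by
        refine Finset.sum_congr rfl fun n _ => ?_
        rw [Finset.smul_sum]
        exact Finset.sum_congr rfl fun j _ => smul_smul _ _ _
      rw [hconv]
      rw [TRI_B M (fun n j => (bb n * bb j) •
        ∑ k ∈ Finset.range n,
          adpow E c k (E.bracket (adpow E c j x) (adpow E c (n-1-k) x)))]
      cases M with
      | zero => simp
      | succ M' =>
        rw [Finset.sum_range_succ'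
          (fun t => ∑ n ∈ Finset.range (t+1), (bb n * bb (t-n)) •
            ∑ k ∈ Finset.range n,
              adpow E c k (E.bracket (adpow E c (t-n) x) (adpow E c (n-1-k) x))) M']
        rw [Finset.sum_range_succ
          (fun n => ((1/2 : ℚ) * bb n) • adpow E c n (E.bracket x x)) M']
        have hrow0 : (∑ n ∈ Finset.range (0+1), (bb n * bb (0-n)) •
            ∑ k ∈ Finset.range n,
              adpow E c k (E.bracket (adpow E c (0-n) x) (adpow E c (n-1-k) x))) = 0 := by
          simp
        rw [hrow0, add_zero]
        have hcomb : (∑ t ∈ Finset.range M', ∑ n ∈ Finset.range (t+1+1), (bb n * bb (t+1-n)) •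
              ∑ k ∈ Finset.range n,
                adpow E c k (E.bracket (adpow E c (t+1-n) x) (adpow E c (n-1-k) x)))
            + (∑ n ∈ Finset.range M', ((1/2 : ℚ) * bb n) • adpow E c n (E.bracket x x)) = 0 := by
          rw [← Finset.sum_add_distrib]
          refine Finset.sum_eq_zero fun l hl => ?_
          have hxx := XXsum (c := c) hc hx l
          rw [show l+2 = l+1+1 from rfl] at hxx
          exact hxx
        rw [show (∑ t ∈ Finset.range M', ∑ n ∈ Finset.range (t+1+1), (bb n * bb (t+1-n)) •
              ∑ k ∈ Finset.range n,
                adpow E c k (E.bracket (adpow E c (t+1-n) x) (adpow E c (n-1-k) x)))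
            + ((∑ n ∈ Finset.range M', ((1/2 : ℚ) * bb n) • adpow E c n (E.bracket x x))
              + ((1/2 : ℚ) * bb M') • adpow E c M' (E.bracket x x))
            = ((∑ t ∈ Finset.range M', ∑ n ∈ Finset.range (t+1+1), (bb n * bb (t+1-n)) •
              ∑ k ∈ Finset.range n,
                adpow E c k (E.bracket (adpow E c (t+1-n) x) (adpow E c (n-1-k) x)))
            + (∑ n ∈ Finset.range M', ((1/2 : ℚ) * bb n) • adpow E c n (E.bracket x x)))
              + ((1/2 : ℚ) * bb M') • adpow E c M' (E.bracket x x) from by abel]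
        rw [hcomb, zero_add]
        refine Submodule.smul_mem _ _ ?_
        have : adpow E c M' (E.bracket x x) ∈ F (M' + 2) :=
          hadF M' 2 _ (hFbr 1 1 x x (hFtop x) (hFtop x))
        exact hmono (by omega) this
    -- Sum4 membership
    have hSum4 : (∑ n ∈ Finset.range M, bb n • ∑ k ∈ Finset.range n,
          adpow E c k (E.bracket (S - P (M-n)) (adpow E c (n-1-k) x))) ∈ F (M+1) := by
      refine Submodule.sum_mem _ fun n hn => Submodule.smul_mem _ _ ?_
      refine Submodule.sum_mem _ fun k hk => ?_
      simp only [Finset.mem_range] at hn hk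
      have h1 : E.bracket (S - P (M-n)) (adpow E c (n-1-k) x)
          ∈ F ((M-n+1) + ((n-1-k)+1)) :=
        hFbr _ _ _ _ (hSP (M-n)) (hadF (n-1-k) 1 x (hFtop x))
      have h2 : adpow E c k (E.bracket (S - P (M-n)) (adpow E c (n-1-k) x))
          ∈ F (k + ((M-n+1) + ((n-1-k)+1))) := hadF k _ _ h1
      exact hmono (by omega) h2
    -- errors
    have hErr1 : E.bracket (S - P M) b ∈ F (M+1) := by
      have := hFbr (M+1) 1 _ _ (hSP M) (hFtop b)
      exact hmono (by omega) this
    have hErr2 : δ (S - P M) ∈ F (M+1) := hδ_filt (M+1) _ (hSP M)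
    rw [hmaster, h2, h3, add_add_add_comm, hEq, hSum1, zero_add]
    exact Submodule.add_mem _ (Submodule.add_mem _ hSum23 hSum4)
      (Submodule.add_mem _ hErr1 hErr2)
  -- separation
  have hinf : δ (δ c) ∈ ⨅ n, F n := by
    rw [Submodule.mem_iInf]
    intro n
    cases n with
    | zero => exact hmono (Nat.zero_le 1) (hFtop _)
    | succ n => exact hkey n
  rw [hFsep] at hinf
  exact hinf
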